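/- Let H be a symplectic Z-module of rank 2g with canonical element ω and standard embedding i : H → ∧³H, h ↦ h∧ω. Suppose g ≥ 2 and let β ∈ H be a primitive vector. Let H' be a rank 2(g−1) symplectic direct summand of β^⊥ complementary to ⟨β⟩ (so β^⊥ = ⟨β⟩ ⊕ H'). Consider the map φ : ∧³(β^⊥) → (∧³H)/i(H). Then the kernel of φ restricted to ∧³(β^⊥) = (∧²H' ∧ β) ⊕ ∧³H' is infinite cyclic, generated by β ∧ ω', where ω' is the canonical element of ∧²H', and in particular Ker(φ) is contained in the factor ∧²H' ∧ β. -/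

import Mathlib

open ExteriorAlgebra

namespace Stmt11Aux

variable {H : Type} [AddCommGroup H] [Module ℤ H]

/-- A family of alternating maps which is `f` in arity 3 and zero elsewhere. -/
def fam3 (f : H [⋀^Fin 3]→ₗ[ℤ] ℤ) : ∀ i : ℕ, H [⋀^Fin i]→ₗ[ℤ] ℤ
  | 3 => f
  | _ => 0

lemma lift3_triple (f : H [⋀^Fin 3]→ₗ[ℤ] ℤ) (u v w : H) :
    liftAlternating (fam3 f) (ι ℤ u * ι ℤ v * ι ℤ w) = f ![u, v, w] := by
  rw [mul_assoc, liftAlternating_ι_mul, liftAlternating_ι_mul, liftAlternating_ι]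
  show ((fam3 f 3).curryLeft u).curryLeft v ![w] = _
  simp [fam3]

/-- Trilinear alternating det form built from three functionals. -/
def tri (p q r : H →ₗ[ℤ] ℤ) : H [⋀^Fin 3]→ₗ[ℤ] ℤ :=
  (Matrix.detRowAlternating).compLinearMap (LinearMap.pi ![p, q, r])

lemma tri_apply (p q r : H →ₗ[ℤ] ℤ) (u v w : H) :
    tri p q r ![u, v, w] =
      p u * q v * r w - p u * r v * q w - q u * p v * r w
      + q u * r v * p w + r u * p v * q w - r u * q v * p w := by
  have h : tri p q r ![u, v, w] =
      Matrix.det (Matrix.of fun i j => (![p, q, r] j) (![u, v, w] i)) := by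
    simp [tri, AlternatingMap.compLinearMap_apply, Matrix.detRowAlternating]
    rfl
  rw [h, Matrix.det_fin_three]
  simp [Matrix.of_apply]

end Stmt11Aux

open Stmt11Aux

/-- With `β = a₁` a primitive vector of a symplectic basis of `H`
(`g ≥ 2`), `H'` the span of `{a₂,b₂,…}` (so `β^⊥ = ⟨β⟩ ⊕ H'`) and `ω'` the canonical
element of `∧²H'`, the kernel of the map `φ : ∧³(β^⊥) → (∧³H)/i(H)` (restriction of the
quotient by the standard embedding `i : h ↦ h ∧ ω`) is infinite cyclic generated by
`β ∧ ω'`, and in particular is contained in the factor `∧²H' ∧ β`. -/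
theorem kernel_of_phi_on_perp (g : ℕ) (hg : 2 ≤ g)
    (H : Type) [AddCommGroup H] [Module ℤ H]
    (e : Module.Basis (Fin g ⊕ Fin g) ℤ H)
    (B : H →ₗ[ℤ] H →ₗ[ℤ] ℤ)
    (hBab : ∀ i j : Fin g, B (e (Sum.inl i)) (e (Sum.inr j)) = if i = j then 1 else 0)
    (hBaa : ∀ i j : Fin g, B (e (Sum.inl i)) (e (Sum.inl j)) = 0)
    (hBbb : ∀ i j : Fin g, B (e (Sum.inr i)) (e (Sum.inr j)) = 0)
    (hBalt : ∀ u : H, B u u = 0)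
    (i0 : Fin g) (hi0 : i0 = ⟨0, by omega⟩)
    (β : H) (hβ : β = e (Sum.inl i0))
    (H' : Submodule ℤ H)
    (hH' : H' = Submodule.span ℤ
      {v : H | ∃ i : Fin g, i ≠ i0 ∧ (v = e (Sum.inl i) ∨ v = e (Sum.inr i))})
    (ω ω' : ExteriorAlgebra ℤ H)
    (hω : ω = ∑ i : Fin g, ι ℤ (e (Sum.inl i)) * ι ℤ (e (Sum.inr i)))
    (hω' : ω' = ∑ i ∈ Finset.univ.erase i0,
      ι ℤ (e (Sum.inl i)) * ι ℤ (e (Sum.inr i)))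
    (iH : H →ₗ[ℤ] ExteriorAlgebra ℤ H)
    (hiH : ∀ h : H, iH h = ι ℤ h * ω)
    (W : Submodule ℤ (ExteriorAlgebra ℤ H))
    (hW : W = Submodule.span ℤ {z : ExteriorAlgebra ℤ H |
        ∃ u v w : H, B β u = 0 ∧ B β v = 0 ∧ B β w = 0 ∧
          z = ι ℤ u * ι ℤ v * ι ℤ w})
    (U : Submodule ℤ (ExteriorAlgebra ℤ H))
    (hU : U = Submodule.span ℤ {z : ExteriorAlgebra ℤ H |
        ∃ u v : H, u ∈ H' ∧ v ∈ H' ∧ z = ι ℤ u * ι ℤ v * ι ℤ β}) :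
    W ⊓ LinearMap.range iH = Submodule.span ℤ {ι ℤ β * ω'}
      ∧ W ⊓ LinearMap.range iH ≤ U := by
  classical
  -- coordinate functionals on basis vectors
  have hc : ∀ s t : Fin g ⊕ Fin g, e.coord s (e t) = if t = s then 1 else 0 := by
    intro s t
    simp [Module.Basis.coord_apply, Module.Basis.repr_self, Finsupp.single_apply]
  have hBβa : ∀ i : Fin g, B β (e (Sum.inl i)) = 0 := by
    intro i; rw [hβ]; exact hBaa i0 i
  have hBβb : ∀ i : Fin g, B β (e (Sum.inr i)) = if i = i0 then 1 else 0 := by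
    intro i; rw [hβ, hBab]; simp [eq_comm]
  have hBβ : (B β) = e.coord (Sum.inr i0) := by
    apply e.ext
    rintro (j | j)
    · rw [hBβa, hc]; simp
    · rw [hBβb, hc]; simp
  have hBβh : ∀ h : H, B β h = e.repr h (Sum.inr i0) := by
    intro h; rw [hBβ, Module.Basis.coord_apply]
  set j1 : Fin g := ⟨1, by omega⟩ with hj1
  have hi0j1 : i0 ≠ j1 := by rw [hi0]; simp [hj1, Fin.ext_iff]
  -- key multiplicative identity
  have hβω : ι ℤ β * ω = ι ℤ β * ω' := by
    rw [hω, hω', ← Finset.add_sum_erase _ _ (Finset.mem_univ i0), mul_add, ← mul_assoc,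
      hβ, ι_sq_zero, zero_mul, zero_add]
  -- swapping lemma
  have hswap : ∀ a b : H, ι ℤ a * ι ℤ b = -(ι ℤ b * ι ℤ a) := fun a b =>
    eq_neg_of_add_eq_zero_left (ι_add_mul_swap a b)
  have hcomm : ∀ a b : H, ι ℤ β * (ι ℤ a * ι ℤ b) = ι ℤ a * ι ℤ b * ι ℤ β := by
    intro a b
    rw [← mul_assoc, hswap β a, neg_mul, mul_assoc, hswap β b, mul_neg, neg_neg, ← mul_assoc]
  -- functionals vanish on W
  have hFW : ∀ (f : H [⋀^Fin 3]→ₗ[ℤ] ℤ),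
      (∀ u v w : H, B β u = 0 → B β v = 0 → B β w = 0 → f ![u, v, w] = 0) →
      ∀ x ∈ W, liftAlternating (fam3 f) x = 0 := by
    intro f hf x hx
    rw [hW] at hx
    induction hx using Submodule.span_induction with
    | mem z hz =>
        obtain ⟨u, v, w, h1, h2, h3, rfl⟩ := hz
        rw [lift3_triple]; exact hf u v w h1 h2 h3
    | zero => simp
    | add x y _ _ hx hy => simp [map_add, hx, hy]
    | smul a x _ hx => rw [map_smul, hx, smul_zero]
  have hFsum : ∀ (f : H [⋀^Fin 3]→ₗ[ℤ] ℤ) (h : H),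
      liftAlternating (fam3 f) (iH h)
        = ∑ i : Fin g, f ![h, e (Sum.inl i), e (Sum.inr i)] := by
    intro f h
    rw [hiH, hω, Finset.mul_sum, map_sum]
    refine Finset.sum_congr rfl fun i _ => ?_
    rw [← mul_assoc, lift3_triple]
  have hkill1 : ∀ (q r : H →ₗ[ℤ] ℤ) (u v w : H), B β u = 0 → B β v = 0 → B β w = 0 →
      tri (B β) q r ![u, v, w] = 0 := by
    intro q r u v w h1 h2 h3
    rw [tri_apply, h1, h2, h3]; ring
  have hkill3 : ∀ (p q : H →ₗ[ℤ] ℤ) (u v w : H), B β u = 0 → B β v = 0 → B β w = 0 →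
      tri p q (B β) ![u, v, w] = 0 := by
    intro p q u v w h1 h2 h3
    rw [tri_apply, h1, h2, h3]; ring
  -- the key: elements of W in the range of iH come from multiples of β
  have key : ∀ h : H, iH h ∈ W → iH h ∈ Submodule.span ℤ {ι ℤ β * ω'} := by
    intro h hhW
    have z1 : e.repr h (Sum.inr i0) = 0 := by
      have h0 := hFW (tri (B β) (e.coord (Sum.inl j1)) (e.coord (Sum.inr j1)))
        (hkill1 _ _) _ hhW
      rw [hFsum] at h0
      have hterm : ∀ i : Fin g,
          tri (B β) (e.coord (Sum.inl j1)) (e.coord (Sum.inr j1))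
            ![h, e (Sum.inl i), e (Sum.inr i)]
          = if i = j1 then e.repr h (Sum.inr i0) else 0 := by
        intro i
        rw [tri_apply]
        rw [hBβa, hBβb, hBβh, hc, hc, hc, hc]
        by_cases hij : i = j1
        · subst hij
          simp [Ne.symm hi0j1]
        · simp [hij]
      simp only [hterm] at h0
      simpa using h0
    have z2 : ∀ j : Fin g, j ≠ i0 → e.repr h (Sum.inl j) = 0 := by
      intro j hj
      have h0 := hFW (tri (e.coord (Sum.inl j)) (e.coord (Sum.inl i0)) (B β))
        (hkill3 _ _) _ hhW
      rw [hFsum] at h0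
      have hterm : ∀ i : Fin g,
          tri (e.coord (Sum.inl j)) (e.coord (Sum.inl i0)) (B β)
            ![h, e (Sum.inl i), e (Sum.inr i)]
          = if i = i0 then e.repr h (Sum.inl j) else 0 := by
        intro i
        rw [tri_apply]
        rw [hBβa, hBβb, hc, hc, hc, hc, Module.Basis.coord_apply]
        by_cases hii : i = i0
        · subst hii
          simp [Ne.symm hj]
        · simp [hii]
      simp only [hterm] at h0
      simpa using h0
    have z3 : ∀ j : Fin g, j ≠ i0 → e.repr h (Sum.inr j) = 0 := by
      intro j hj
      have h0 := hFW (tri (e.coord (Sum.inr j)) (e.coord (Sum.inl i0)) (B β))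
        (hkill3 _ _) _ hhW
      rw [hFsum] at h0
      have hterm : ∀ i : Fin g,
          tri (e.coord (Sum.inr j)) (e.coord (Sum.inl i0)) (B β)
            ![h, e (Sum.inl i), e (Sum.inr i)]
          = if i = i0 then e.repr h (Sum.inr j) else 0 := by
        intro i
        rw [tri_apply]
        rw [hBβa, hBβb, hc, hc, hc, hc, Module.Basis.coord_apply]
        by_cases hii : i = i0
        · subst hii
          simp [Ne.symm hj]
        · simp [hii]
      simp only [hterm] at h0
      simpa using h0
    have hrepr : e.repr h = Finsupp.single (Sum.inl i0) (e.repr h (Sum.inl i0)) := by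
      ext s
      rcases s with j | j
      · by_cases hji : j = i0
        · subst hji; simp [Finsupp.single_apply]
        · rw [z2 j hji]; simp [Finsupp.single_apply, Ne.symm hji]
      · by_cases hji : j = i0
        · subst hji; rw [z1]; simp [Finsupp.single_apply]
        · rw [z3 j hji]; simp [Finsupp.single_apply]
    rw [Submodule.mem_span_singleton]
    refine ⟨e.repr h (Sum.inl i0), ?_⟩
    have hh := e.repr_symm_single (Sum.inl i0) (e.repr h (Sum.inl i0))
    rw [← hrepr, e.repr.symm_apply_apply] at hh
    conv_rhs => rw [hh]
    rw [LinearMap.map_smul, hiH, ← hβ, hβω]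
  -- membership of the generator
  have hmemW : ι ℤ β * ω' ∈ W := by
    rw [hW, hω', Finset.mul_sum]
    refine Submodule.sum_mem _ fun i hi => ?_
    rw [← mul_assoc]
    refine Submodule.subset_span ⟨β, e (Sum.inl i), e (Sum.inr i), hBalt β, hBβa i, ?_, rfl⟩
    rw [hBβb]
    simp [(Finset.mem_erase.1 hi).1]
  have hmemR : ι ℤ β * ω' ∈ LinearMap.range iH :=
    ⟨β, by rw [hiH, hβω]⟩
  have part1 : W ⊓ LinearMap.range iH = Submodule.span ℤ {ι ℤ β * ω'} := by
    apply le_antisymm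
    · intro x hx
      rw [Submodule.mem_inf] at hx
      obtain ⟨hxW, h, rfl⟩ := hx
      exact key h hxW
    · rw [Submodule.span_le, Set.singleton_subset_iff]
      exact Submodule.mem_inf.2 ⟨hmemW, hmemR⟩
  refine ⟨part1, ?_⟩
  rw [part1, Submodule.span_le, Set.singleton_subset_iff, hU]
  rw [hω', Finset.mul_sum]
  refine Submodule.sum_mem _ fun i hi => ?_
  have hine : i ≠ i0 := (Finset.mem_erase.1 hi).1
  rw [hcomm]
  refine Submodule.subset_span ⟨e (Sum.inl i), e (Sum.inr i), ?_, ?_, rfl⟩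
  · rw [hH']; exact Submodule.subset_span ⟨i, hine, Or.inl rfl⟩
  · rw [hH']; exact Submodule.subset_span ⟨i, hine, Or.inr rfl⟩
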